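/- Let G̃ be a graph with vertex set V₁ ∪ {s₁} ∪ V₂ ∪ {s₂} such that: the adjacencies between V₁ and V₂ are given by an arbitrary edge set E ⊆ V₁ × V₂; s₁ is adjacent to every vertex of V₁ and to s₂; s₂ is adjacent to every vertex of V₂ and to s₁; there are no other edges. Fix any vertex k₀ ∈ V₂ that is a neighbor of s₂. Then applying the operation G ↦ τ_{k₀}( τ_{s₂}( τ_{k₀}(G) ) − s₂ ) followed by the analogous X-measurement pattern at s₁ (with an appropriate neighbor as special vertex) yields the bipartite complement graph on V₁ ∪ V₂: vᵢ ∈ V₁ and vⱼ ∈ V₂ adjacent iff (vᵢ, vⱼ) ∉ E, with no intra-part edges. -/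

import Mathlib

/-- Local complementation of `G` at vertex `v`: adjacency between distinct
vertices `x, y` is toggled iff both are neighbors of `v`. -/
def localComp {V : Type*} (G : SimpleGraph V) (v : V) : SimpleGraph V where
  Adj x y := x ≠ y ∧ ¬(G.Adj x y ↔ (G.Adj v x ∧ G.Adj v y))
  symm := by
    constructor
    intro x y ⟨hxy, h⟩
    refine ⟨hxy.symm, ?_⟩
    rwa [G.adj_comm y x, and_comm]
  loopless := by
    constructor
    intro x ⟨h, _⟩
    exact h rfl

/-- Deletion of vertex `w`: remove all edges incident to `w`. -/
def deleteVert {V : Type*} (G : SimpleGraph V) (w : V) : SimpleGraph V where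
  Adj x y := G.Adj x y ∧ x ≠ w ∧ y ≠ w
  symm := ⟨fun x y ⟨h, hx, hy⟩ => ⟨h.symm, hy, hx⟩⟩
  loopless := ⟨fun x ⟨h, _, _⟩ => G.irrefl h⟩

/-- Graph operation of Pauli-X measurement at `a` with special neighbor `k0`:
`τ_{k0}( τ_a( τ_{k0}(G) ) − a )`. -/
def xMeas {V : Type*} (G : SimpleGraph V) (a k0 : V) : SimpleGraph V :=
  localComp (deleteVert (localComp (localComp G k0) a) a) k0

private lemma localComp_adj' {V : Type*} (G : SimpleGraph V) (v x y : V) :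
    (localComp G v).Adj x y ↔ x ≠ y ∧ ¬(G.Adj x y ↔ (G.Adj v x ∧ G.Adj v y)) := Iff.rfl

private lemma deleteVert_adj' {V : Type*} (G : SimpleGraph V) (w x y : V) :
    (deleteVert G w).Adj x y ↔ G.Adj x y ∧ x ≠ w ∧ y ≠ w := Iff.rfl

set_option maxHeartbeats 4000000 in
/-- Lemma 2 (Case II, Inter-QLAN-like): super-node `s₁` adjacent to all of its
local part `V₁` and to `s₂`; `s₂` adjacent to all of `V₂` and to `s₁`; client
adjacency given by `E ⊆ V₁ × V₂`. Applying the X-measurement pattern at `s₂`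
and then at `s₁`, with special neighbor `k₀ ∈ V₂` (a neighbor of `s₂`), yields
the bipartite complement graph on `V₁ ∪ V₂`. -/
theorem xMeas_local_supernodes_yields_bipartite_complement {V : Type*}
    (V1 V2 : Set V) (s1 s2 : V) (E : V → V → Prop) (G : SimpleGraph V)
    (hdisj : Disjoint V1 V2) (hV1 : V1.Nonempty) (hV2 : V2.Nonempty)
    (hs1 : s1 ∉ V1 ∪ V2) (hs2 : s2 ∉ V1 ∪ V2) (hs12 : s1 ≠ s2)
    (hG : ∀ x y, G.Adj x y ↔
      (x ∈ V1 ∧ y ∈ V2 ∧ E x y) ∨ (y ∈ V1 ∧ x ∈ V2 ∧ E y x) ∨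
      (x = s1 ∧ y ∈ V1) ∨ (y = s1 ∧ x ∈ V1) ∨
      (x = s2 ∧ y ∈ V2) ∨ (y = s2 ∧ x ∈ V2) ∨
      (x = s1 ∧ y = s2) ∨ (x = s2 ∧ y = s1))
    (k0 : V) (hk0 : k0 ∈ V2) (hk0s2 : G.Adj s2 k0) :
    ∀ x y, (xMeas (xMeas G s2 k0) s1 k0).Adj x y ↔
      (x ∈ V1 ∧ y ∈ V2 ∧ ¬ E x y) ∨ (y ∈ V1 ∧ x ∈ V2 ∧ ¬ E y x) := by 
  have d12 : ∀ a, a ∈ V1 → a ∉ V2 := fun a h => Set.disjoint_left.mp hdisj h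
  have hs1V1 : s1 ∉ V1 := fun h => hs1 (Or.inl h)
  have hs1V2 : s1 ∉ V2 := fun h => hs1 (Or.inr h)
  have hs2V1 : s2 ∉ V1 := fun h => hs2 (Or.inl h)
  have hs2V2 : s2 ∉ V2 := fun h => hs2 (Or.inr h)
  have hk0V1 : k0 ∉ V1 := fun h => d12 k0 h hk0
  have hk0s1 : k0 ≠ s1 := fun h => hs1V2 (h ▸ hk0)
  have hk0s2' : k0 ≠ s2 := fun h => hs2V2 (h ▸ hk0)
  have hs21 : s2 ≠ s1 := fun h => hs12 h.symm
  have cls : ∀ a : V, a = s1 ∨ a = s2 ∨ a = k0 ∨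
      (a ∈ V1 ∧ a ∉ V2 ∧ a ≠ s1 ∧ s1 ≠ a ∧ a ≠ s2 ∧ s2 ≠ a ∧ a ≠ k0 ∧ k0 ≠ a) ∨
      (a ∈ V2 ∧ a ∉ V1 ∧ a ≠ s1 ∧ s1 ≠ a ∧ a ≠ s2 ∧ s2 ≠ a ∧ a ≠ k0 ∧ k0 ≠ a) ∨
      (a ∉ V1 ∧ a ∉ V2 ∧ a ≠ s1 ∧ s1 ≠ a ∧ a ≠ s2 ∧ s2 ≠ a ∧ a ≠ k0 ∧ k0 ≠ a) := by
    intro a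
    by_cases h1 : a = s1; · tauto
    by_cases h2 : a = s2; · tauto
    by_cases h3 : a = k0; · tauto
    by_cases h4 : a ∈ V1
    · exact Or.inr <| Or.inr <| Or.inr <| Or.inl
        ⟨h4, d12 a h4, h1, fun h => h1 h.symm, h2, fun h => h2 h.symm, h3, fun h => h3 h.symm⟩
    by_cases h5 : a ∈ V2
    · exact Or.inr <| Or.inr <| Or.inr <| Or.inr <| Or.inl
        ⟨h5, h4, h1, fun h => h1 h.symm, h2, fun h => h2 h.symm, h3, fun h => h3 h.symm⟩
    · exact Or.inr <| Or.inr <| Or.inr <| Or.inr <| Or.inr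
        ⟨h4, h5, h1, fun h => h1 h.symm, h2, fun h => h2 h.symm, h3, fun h => h3 h.symm⟩
  clear hk0s2 hV1 hV2
  have h1 : ∀ x y, (localComp G k0).Adj x y ↔
      (x ∈ V1 ∧ y ∈ V2 ∧ E x y) ∨ (y ∈ V1 ∧ x ∈ V2 ∧ E y x) ∨
      (x = s1 ∧ y ∈ V1) ∨ (y = s1 ∧ x ∈ V1) ∨
      (x = s2 ∧ y ∈ V2) ∨ (y = s2 ∧ x ∈ V2) ∨
      (x = s1 ∧ y = s2) ∨ (x = s2 ∧ y = s1) ∨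
      (x ∈ V1 ∧ y ∈ V1 ∧ x ≠ y ∧ E x k0 ∧ E y k0) ∨
      (x ∈ V1 ∧ E x k0 ∧ y = s2) ∨ (y ∈ V1 ∧ E y k0 ∧ x = s2) := by
    intro x y
    by_cases hxy : x = y
    · subst hxy
      rw [localComp_adj']
      simp only [hG]
      rcases cls x with hx|hx|hx|⟨hx1,hx2,hx3,hx4,hx5,hx6,hx7,hx8⟩|⟨hx1,hx2,hx3,hx4,hx5,hx6,hx7,hx8⟩|⟨hx1,hx2,hx3,hx4,hx5,hx6,hx7,hx8⟩ <;>
        subst_vars <;> (try simp_all) <;> tauto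
    · have hyx : y ≠ x := fun h => hxy h.symm
      rw [localComp_adj']
      simp only [hG]
      rcases cls x with hx|hx|hx|⟨hx1,hx2,hx3,hx4,hx5,hx6,hx7,hx8⟩|⟨hx1,hx2,hx3,hx4,hx5,hx6,hx7,hx8⟩|⟨hx1,hx2,hx3,hx4,hx5,hx6,hx7,hx8⟩ <;>
      rcases cls y with hy|hy|hy|⟨hy1,hy2,hy3,hy4,hy5,hy6,hy7,hy8⟩|⟨hy1,hy2,hy3,hy4,hy5,hy6,hy7,hy8⟩|⟨hy1,hy2,hy3,hy4,hy5,hy6,hy7,hy8⟩ <;>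
        subst_vars <;> (try simp_all) <;> tauto
  have h2 : ∀ x y, (localComp (localComp G k0) s2).Adj x y ↔
      (x ∈ V1 ∧ y ∈ V2 ∧ ¬(E x y ↔ E x k0)) ∨ (y ∈ V1 ∧ x ∈ V2 ∧ ¬(E y x ↔ E y k0)) ∨
      (x = s1 ∧ y ∈ V1 ∧ ¬ E y k0) ∨ (y = s1 ∧ x ∈ V1 ∧ ¬ E x k0) ∨
      (x = s1 ∧ y ∈ V2) ∨ (y = s1 ∧ x ∈ V2) ∨
      (x ∈ V2 ∧ y ∈ V2 ∧ x ≠ y) ∨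
      (x = s1 ∧ y = s2) ∨ (y = s1 ∧ x = s2) ∨
      (x = s2 ∧ y ∈ V2) ∨ (y = s2 ∧ x ∈ V2) ∨
      (x = s2 ∧ y ∈ V1 ∧ E y k0) ∨ (y = s2 ∧ x ∈ V1 ∧ E x k0) := by
    intro x y
    by_cases hxy : x = y
    · subst hxy
      rw [localComp_adj']
      simp only [h1]
      rcases cls x with hx|hx|hx|⟨hx1,hx2,hx3,hx4,hx5,hx6,hx7,hx8⟩|⟨hx1,hx2,hx3,hx4,hx5,hx6,hx7,hx8⟩|⟨hx1,hx2,hx3,hx4,hx5,hx6,hx7,hx8⟩ <;>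
        subst_vars <;> (try simp_all) <;> tauto
    · have hyx : y ≠ x := fun h => hxy h.symm
      rw [localComp_adj']
      simp only [h1]
      rcases cls x with hx|hx|hx|⟨hx1,hx2,hx3,hx4,hx5,hx6,hx7,hx8⟩|⟨hx1,hx2,hx3,hx4,hx5,hx6,hx7,hx8⟩|⟨hx1,hx2,hx3,hx4,hx5,hx6,hx7,hx8⟩ <;>
      rcases cls y with hy|hy|hy|⟨hy1,hy2,hy3,hy4,hy5,hy6,hy7,hy8⟩|⟨hy1,hy2,hy3,hy4,hy5,hy6,hy7,hy8⟩|⟨hy1,hy2,hy3,hy4,hy5,hy6,hy7,hy8⟩ <;>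
        subst_vars <;> (try simp_all) <;> tauto
  have h3 : ∀ x y, (deleteVert (localComp (localComp G k0) s2) s2).Adj x y ↔
      (x ∈ V1 ∧ y ∈ V2 ∧ ¬(E x y ↔ E x k0)) ∨ (y ∈ V1 ∧ x ∈ V2 ∧ ¬(E y x ↔ E y k0)) ∨
      (x = s1 ∧ y ∈ V1 ∧ ¬ E y k0) ∨ (y = s1 ∧ x ∈ V1 ∧ ¬ E x k0) ∨
      (x = s1 ∧ y ∈ V2) ∨ (y = s1 ∧ x ∈ V2) ∨ (x ∈ V2 ∧ y ∈ V2 ∧ x ≠ y) := by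
    intro x y
    by_cases hxy : x = y
    · subst hxy
      rw [deleteVert_adj']
      simp only [h2]
      rcases cls x with hx|hx|hx|⟨hx1,hx2,hx3,hx4,hx5,hx6,hx7,hx8⟩|⟨hx1,hx2,hx3,hx4,hx5,hx6,hx7,hx8⟩|⟨hx1,hx2,hx3,hx4,hx5,hx6,hx7,hx8⟩ <;>
        subst_vars <;> (try simp_all) <;> tauto
    · have hyx : y ≠ x := fun h => hxy h.symm
      rw [deleteVert_adj']
      simp only [h2]
      rcases cls x with hx|hx|hx|⟨hx1,hx2,hx3,hx4,hx5,hx6,hx7,hx8⟩|⟨hx1,hx2,hx3,hx4,hx5,hx6,hx7,hx8⟩|⟨hx1,hx2,hx3,hx4,hx5,hx6,hx7,hx8⟩ <;>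
      rcases cls y with hy|hy|hy|⟨hy1,hy2,hy3,hy4,hy5,hy6,hy7,hy8⟩|⟨hy1,hy2,hy3,hy4,hy5,hy6,hy7,hy8⟩|⟨hy1,hy2,hy3,hy4,hy5,hy6,hy7,hy8⟩ <;>
        subst_vars <;> (try simp_all) <;> tauto
  have h4 : ∀ x y, (xMeas G s2 k0).Adj x y ↔
      (x ∈ V1 ∧ y ∈ V2 ∧ ¬(E x y ↔ E x k0)) ∨ (y ∈ V1 ∧ x ∈ V2 ∧ ¬(E y x ↔ E y k0)) ∨
      (x = s1 ∧ y ∈ V1 ∧ ¬ E y k0) ∨ (y = s1 ∧ x ∈ V1 ∧ ¬ E x k0) ∨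
      (x = s1 ∧ y = k0) ∨ (y = s1 ∧ x = k0) ∨
      (x = k0 ∧ y ∈ V2 ∧ y ≠ k0) ∨ (y = k0 ∧ x ∈ V2 ∧ x ≠ k0) := by
    intro x y
    by_cases hxy : x = y
    · subst hxy
      rw [xMeas, localComp_adj']
      simp only [h3]
      rcases cls x with hx|hx|hx|⟨hx1,hx2,hx3,hx4,hx5,hx6,hx7,hx8⟩|⟨hx1,hx2,hx3,hx4,hx5,hx6,hx7,hx8⟩|⟨hx1,hx2,hx3,hx4,hx5,hx6,hx7,hx8⟩ <;>
        subst_vars <;> (try simp_all) <;> tauto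
    · have hyx : y ≠ x := fun h => hxy h.symm
      rw [xMeas, localComp_adj']
      simp only [h3]
      rcases cls x with hx|hx|hx|⟨hx1,hx2,hx3,hx4,hx5,hx6,hx7,hx8⟩|⟨hx1,hx2,hx3,hx4,hx5,hx6,hx7,hx8⟩|⟨hx1,hx2,hx3,hx4,hx5,hx6,hx7,hx8⟩ <;>
      rcases cls y with hy|hy|hy|⟨hy1,hy2,hy3,hy4,hy5,hy6,hy7,hy8⟩|⟨hy1,hy2,hy3,hy4,hy5,hy6,hy7,hy8⟩|⟨hy1,hy2,hy3,hy4,hy5,hy6,hy7,hy8⟩ <;>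
        subst_vars <;> (try simp_all) <;> tauto
  have h5 : ∀ x y, (localComp (xMeas G s2 k0) k0).Adj x y ↔
      (x ∈ V1 ∧ y ∈ V2 ∧ ¬(E x y ↔ E x k0)) ∨ (y ∈ V1 ∧ x ∈ V2 ∧ ¬(E y x ↔ E y k0)) ∨
      (x = s1 ∧ y ∈ V1 ∧ ¬ E y k0) ∨ (y = s1 ∧ x ∈ V1 ∧ ¬ E x k0) ∨
      (x = s1 ∧ y ∈ V2) ∨ (y = s1 ∧ x ∈ V2) ∨ (x ∈ V2 ∧ y ∈ V2 ∧ x ≠ y) := by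
    intro x y
    by_cases hxy : x = y
    · subst hxy
      rw [localComp_adj']
      simp only [h4]
      rcases cls x with hx|hx|hx|⟨hx1,hx2,hx3,hx4,hx5,hx6,hx7,hx8⟩|⟨hx1,hx2,hx3,hx4,hx5,hx6,hx7,hx8⟩|⟨hx1,hx2,hx3,hx4,hx5,hx6,hx7,hx8⟩ <;>
        subst_vars <;> (try simp_all) <;> tauto
    · have hyx : y ≠ x := fun h => hxy h.symm
      rw [localComp_adj']
      simp only [h4]
      rcases cls x with hx|hx|hx|⟨hx1,hx2,hx3,hx4,hx5,hx6,hx7,hx8⟩|⟨hx1,hx2,hx3,hx4,hx5,hx6,hx7,hx8⟩|⟨hx1,hx2,hx3,hx4,hx5,hx6,hx7,hx8⟩ <;>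
      rcases cls y with hy|hy|hy|⟨hy1,hy2,hy3,hy4,hy5,hy6,hy7,hy8⟩|⟨hy1,hy2,hy3,hy4,hy5,hy6,hy7,hy8⟩|⟨hy1,hy2,hy3,hy4,hy5,hy6,hy7,hy8⟩ <;>
        subst_vars <;> (try simp_all) <;> tauto
  have h6 : ∀ x y, (localComp (localComp (xMeas G s2 k0) k0) s1).Adj x y ↔
      (x ∈ V1 ∧ y ∈ V2 ∧ ¬ E x y) ∨ (y ∈ V1 ∧ x ∈ V2 ∧ ¬ E y x) ∨
      (x ∈ V1 ∧ y ∈ V1 ∧ x ≠ y ∧ ¬ E x k0 ∧ ¬ E y k0) ∨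
      (x = s1 ∧ y ∈ V1 ∧ ¬ E y k0) ∨ (y = s1 ∧ x ∈ V1 ∧ ¬ E x k0) ∨
      (x = s1 ∧ y ∈ V2) ∨ (y = s1 ∧ x ∈ V2) := by
    intro x y
    by_cases hxy : x = y
    · subst hxy
      rw [localComp_adj']
      simp only [h5]
      rcases cls x with hx|hx|hx|⟨hx1,hx2,hx3,hx4,hx5,hx6,hx7,hx8⟩|⟨hx1,hx2,hx3,hx4,hx5,hx6,hx7,hx8⟩|⟨hx1,hx2,hx3,hx4,hx5,hx6,hx7,hx8⟩ <;>
        subst_vars <;> (try simp_all) <;> tauto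
    · have hyx : y ≠ x := fun h => hxy h.symm
      rw [localComp_adj']
      simp only [h5]
      rcases cls x with hx|hx|hx|⟨hx1,hx2,hx3,hx4,hx5,hx6,hx7,hx8⟩|⟨hx1,hx2,hx3,hx4,hx5,hx6,hx7,hx8⟩|⟨hx1,hx2,hx3,hx4,hx5,hx6,hx7,hx8⟩ <;>
      rcases cls y with hy|hy|hy|⟨hy1,hy2,hy3,hy4,hy5,hy6,hy7,hy8⟩|⟨hy1,hy2,hy3,hy4,hy5,hy6,hy7,hy8⟩|⟨hy1,hy2,hy3,hy4,hy5,hy6,hy7,hy8⟩ <;>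
        subst_vars <;> (try simp_all) <;> tauto
  have h7 : ∀ x y, (deleteVert (localComp (localComp (xMeas G s2 k0) k0) s1) s1).Adj x y ↔
      (x ∈ V1 ∧ y ∈ V2 ∧ ¬ E x y) ∨ (y ∈ V1 ∧ x ∈ V2 ∧ ¬ E y x) ∨
      (x ∈ V1 ∧ y ∈ V1 ∧ x ≠ y ∧ ¬ E x k0 ∧ ¬ E y k0) := by
    intro x y
    by_cases hxy : x = y
    · subst hxy
      rw [deleteVert_adj']
      simp only [h6]
      rcases cls x with hx|hx|hx|⟨hx1,hx2,hx3,hx4,hx5,hx6,hx7,hx8⟩|⟨hx1,hx2,hx3,hx4,hx5,hx6,hx7,hx8⟩|⟨hx1,hx2,hx3,hx4,hx5,hx6,hx7,hx8⟩ <;>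
        subst_vars <;> (try simp_all) <;> tauto
    · have hyx : y ≠ x := fun h => hxy h.symm
      rw [deleteVert_adj']
      simp only [h6]
      rcases cls x with hx|hx|hx|⟨hx1,hx2,hx3,hx4,hx5,hx6,hx7,hx8⟩|⟨hx1,hx2,hx3,hx4,hx5,hx6,hx7,hx8⟩|⟨hx1,hx2,hx3,hx4,hx5,hx6,hx7,hx8⟩ <;>
      rcases cls y with hy|hy|hy|⟨hy1,hy2,hy3,hy4,hy5,hy6,hy7,hy8⟩|⟨hy1,hy2,hy3,hy4,hy5,hy6,hy7,hy8⟩|⟨hy1,hy2,hy3,hy4,hy5,hy6,hy7,hy8⟩ <;>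
        subst_vars <;> (try simp_all) <;> tauto
  intro x y
  by_cases hxy : x = y
  · subst hxy
    rw [xMeas, localComp_adj']
    simp only [h7]
    rcases cls x with hx|hx|hx|⟨hx1,hx2,hx3,hx4,hx5,hx6,hx7,hx8⟩|⟨hx1,hx2,hx3,hx4,hx5,hx6,hx7,hx8⟩|⟨hx1,hx2,hx3,hx4,hx5,hx6,hx7,hx8⟩ <;>
      subst_vars <;> (try simp_all) <;> tauto
  · have hyx : y ≠ x := fun h => hxy h.symm
    rw [xMeas, localComp_adj']
    simp only [h7]
    rcases cls x with hx|hx|hx|⟨hx1,hx2,hx3,hx4,hx5,hx6,hx7,hx8⟩|⟨hx1,hx2,hx3,hx4,hx5,hx6,hx7,hx8⟩|⟨hx1,hx2,hx3,hx4,hx5,hx6,hx7,hx8⟩ <;>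
    rcases cls y with hy|hy|hy|⟨hy1,hy2,hy3,hy4,hy5,hy6,hy7,hy8⟩|⟨hy1,hy2,hy3,hy4,hy5,hy6,hy7,hy8⟩|⟨hy1,hy2,hy3,hy4,hy5,hy6,hy7,hy8⟩ <;>
      subst_vars <;> (try simp_all) <;> tauto
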